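/- Let $m > 1$, $x, y \ge 0$ not both zero, $E > 0$, $\lambda > 0$. Then $\max_{p \in [0,E]} \big[(x^{m-1} p/\lambda)^{1/m} + (y^{m-1}(E-p)/\lambda)^{1/m}\big] = \big(E (x+y)^{m-1}/\lambda\big)^{1/m}$. Equivalently, the map $g \mapsto g^{1/(m-1)}$ linearizes the optimal splitting of energy: the effective gain of two slots with gains $g_1, g_2$ is $\big(g_1^{1/(m-1)} + g_2^{1/(m-1)}\big)^{m-1}$. -/

import Mathlib

open Real Set

theorem stmt_14 (m x y E lam : ℝ) (hm : 1 < m) (hx : 0 ≤ x) (hy : 0 ≤ y)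
    (hxy : ¬(x = 0 ∧ y = 0)) (hE : 0 < E) (hlam : 0 < lam) :
    IsGreatest
      ((fun p : ℝ =>
        (x ^ (m - 1) * p / lam) ^ (1 / m) + (y ^ (m - 1) * (E - p) / lam) ^ (1 / m)) ''
        Set.Icc 0 E)
      ((E * (x + y) ^ (m - 1) / lam) ^ (1 / m)) := by
  have hm0 : (0:ℝ) < m := lt_trans one_pos hm
  set θ : ℝ := 1 / m with hθdef
  have hθ0 : 0 < θ := by positivity
  have hθ1 : θ < 1 := by rw [hθdef, div_lt_one hm0]; exact hm
  have hs : 0 < x + y := by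
    rcases hx.lt_or_eq with h | h
    · linarith
    · rcases hy.lt_or_eq with h' | h'
      · linarith
      · exact absurd ⟨h.symm, h'.symm⟩ hxy
  set s : ℝ := x + y with hsdef
  set T : ℝ := (E / lam) ^ θ * s ^ (1 - θ) with hTdef
  have hme : (m - 1) * θ = 1 - θ := by
    rw [hθdef]; field_simp
  -- key rewriting lemma
  have key : ∀ a b : ℝ, 0 ≤ a → 0 ≤ b →
      (b ^ (m - 1) * a / lam) ^ θ = T * ((a / E) ^ θ * (b / s) ^ (1 - θ)) := by
    intro a b ha hb
    have h1 : (b ^ (m - 1) * a / lam) ^ θ = b ^ (1 - θ) * (a / lam) ^ θ := by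
      rw [mul_div_assoc, Real.mul_rpow (Real.rpow_nonneg hb _) (by positivity),
        ← Real.rpow_mul hb, hme]
    rw [h1, hTdef, Real.div_rpow ha hE.le, Real.div_rpow hb hs.le,
      Real.div_rpow ha hlam.le, Real.div_rpow hE.le hlam.le]
    have h2 : (0:ℝ) < E ^ θ := Real.rpow_pos_of_pos hE _
    have h3 : (0:ℝ) < s ^ (1 - θ) := Real.rpow_pos_of_pos hs _
    have h4 : (0:ℝ) < lam ^ θ := Real.rpow_pos_of_pos hlam _
    field_simp
  have htarget : (E * (x + y) ^ (m - 1) / lam) ^ θ = T := by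
    rw [mul_comm, key E s hE.le hs.le, div_self hE.ne', div_self hs.ne',
      Real.one_rpow, Real.one_rpow]
    ring
  constructor
  · refine ⟨E * x / s, ⟨by positivity, ?_⟩, ?_⟩
    · rw [div_le_iff₀ hs]
      nlinarith
    · show (x ^ (m-1) * (E * x / s) / lam) ^ θ + (y ^ (m-1) * (E - E * x / s) / lam) ^ θ
        = (E * (x + y) ^ (m-1) / lam) ^ θ
      have hxE : E * x / s / E = x / s := by
        field_simp
      have hEy : E - E * x / s = E * y / s := by
        field_simp; ring
      have hyE : E * y / s / E = y / s := by
        field_simp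
      have pow1 : ∀ c : ℝ, 0 ≤ c → (c / s) ^ θ * (c / s) ^ (1 - θ) = c / s := by
        intro c hc
        rw [← Real.rpow_add' (by positivity) (by norm_num)]
        norm_num
      rw [key _ x (by positivity) hx, hEy, key _ y (by positivity) hy, hxE, hyE,
        pow1 x hx, pow1 y hy, htarget]
      have : x / s + y / s = 1 := by field_simp; exact hsdef.symm
      calc T * (x / s) + T * (y / s) = T * (x / s + y / s) := by ring
        _ = T := by rw [this, mul_one]
  · rintro v ⟨p, ⟨hp0, hpE⟩, rfl⟩
    show (x ^ (m-1) * p / lam) ^ θ + (y ^ (m-1) * (E - p) / lam) ^ θ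
      ≤ (E * (x + y) ^ (m-1) / lam) ^ θ
    rw [htarget, key p x hp0 hx, key (E - p) y (by linarith) hy]
    have hg1 : (p / E) ^ θ * (x / s) ^ (1 - θ) ≤ θ * (p / E) + (1 - θ) * (x / s) :=
      Real.geom_mean_le_arith_mean2_weighted hθ0.le (by linarith) (by positivity)
        (by positivity) (by ring)
    have hg2 : ((E - p) / E) ^ θ * (y / s) ^ (1 - θ) ≤ θ * ((E - p) / E) + (1 - θ) * (y / s) :=
      Real.geom_mean_le_arith_mean2_weighted hθ0.le (by linarith)
        (by apply div_nonneg <;> linarith) (by positivity) (by ring)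
    have hsum : (θ * (p / E) + (1 - θ) * (x / s)) + (θ * ((E - p) / E) + (1 - θ) * (y / s))
        = 1 := by
      field_simp
      ring
    have hT0 : 0 ≤ T := by positivity
    nlinarith
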